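/- Let (L₁, L₂, P, (⊛ᵢ, ↙ⁱ, ↖ᵢ)_{i∈I}) be a multi-adjoint frame, (X, Y, φ, τ) a context of this frame, and φ↑, φ↓ the associated concept-forming operators. The multi-adjoint concept lattice M = { (μ, λ) ∈ (X → L₁) × (Y → L₂) ∣ φ↑ μ = λ and φ↓ λ = μ }, ordered by (μ₁, λ₁) ≤ (μ₂, λ₂) ⇔ μ₁ ≤ μ₂ pointwise, is a complete lattice, and the first projection (μ, λ) ↦ μ is an order isomorphism from M onto the complete lattice Fix(φ↓∘φ↑) = { μ : X → L₁ ∣ φ↓(φ↑ μ) = μ } with the pointwise order. -/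
import Mathlib


/-- The multi-adjoint concept lattice of a context: pairs `(μ, lam)` with
`φ↑ μ = lam` and `φ↓ lam = μ`. -/
abbrev MAConceptLattice {L₁ L₂ : Type*} {X Y : Type*}
    (up : (X → L₁) → Y → L₂) (dn : (Y → L₂) → X → L₁) : Type _ :=
  {p : (X → L₁) × (Y → L₂) // up p.1 = p.2 ∧ dn p.2 = p.1}

/-- Concepts are ordered by comparing their extents `μ` (pointwise). -/
instance {L₁ L₂ : Type*} [Preorder L₁] {X Y : Type*}
    (up : (X → L₁) → Y → L₂) (dn : (Y → L₂) → X → L₁) :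
    LE (MAConceptLattice up dn) :=
  ⟨fun p q => p.1.1 ≤ q.1.1⟩

/-- The multi-adjoint concept lattice, ordered by first
components, is a complete lattice, and the first projection is an order
isomorphism onto the fixed points of `φ↓ ∘ φ↑` with the pointwise order. -/
theorem stmt_7 {L₁ L₂ P : Type*} [CompleteLattice L₁] [CompleteLattice L₂]
    [CompleteLattice P] {I : Type*}
    (w : I → L₁ → L₂ → P) (ld : I → P → L₂ → L₁) (lu : I → P → L₁ → L₂)
    (adj : ∀ (i : I) (x : L₁) (y : L₂) (z : P),
      (w i x y ≤ z ↔ x ≤ ld i z y) ∧ (w i x y ≤ z ↔ y ≤ lu i z x))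
    {X Y : Type*} (φ : X → Y → P) (τ : Y → I)
    (up : (X → L₁) → Y → L₂) (dn : (Y → L₂) → X → L₁)
    (hup : ∀ (μ : X → L₁) (y : Y), up μ y = ⨅ x, lu (τ y) (φ x y) (μ x))
    (hdn : ∀ (lam : Y → L₂) (x : X), dn lam x = ⨅ y, ld (τ y) (φ x y) (lam y)) :
    -- the concept lattice is a complete lattice whose order is the one above
    (∃ inst : CompleteLattice (MAConceptLattice up dn),
      ∀ p q : MAConceptLattice up dn, inst.le p q ↔ p ≤ q) ∧
    -- the first projection is an order isomorphism onto `Fix (φ↓ ∘ φ↑)`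
    (∃ e : MAConceptLattice up dn ≃o {μ : X → L₁ // dn (up μ) = μ},
      ∀ p : MAConceptLattice up dn, (e p : X → L₁) = p.1.1) := by
  -- key Galois connection
  have key : ∀ (μ : X → L₁) (lam : Y → L₂), lam ≤ up μ ↔ μ ≤ dn lam := by
    intro μ lam
    constructor
    · intro h x
      rw [hdn]
      refine le_iInf fun y => ?_
      have := (h y).trans_eq (hup μ y)
      have hy := le_iInf_iff.mp this x
      exact ((adj (τ y) (μ x) (lam y) (φ x y)).1.mp
        (((adj (τ y) (μ x) (lam y) (φ x y)).2.mpr hy)))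
    · intro h y
      rw [hup]
      refine le_iInf fun x => ?_
      have := (h x).trans_eq (hdn lam x)
      have hx := le_iInf_iff.mp this y
      exact ((adj (τ y) (μ x) (lam y) (φ x y)).2.mp
        (((adj (τ y) (μ x) (lam y) (φ x y)).1.mpr hx)))
  have le_cl : ∀ μ : X → L₁, μ ≤ dn (up μ) := fun μ => (key μ (up μ)).mp le_rfl
  have le_cl' : ∀ lam : Y → L₂, lam ≤ up (dn lam) := fun lam =>
    (key (dn lam) lam).mpr le_rfl
  have up_anti : ∀ {μ ν : X → L₁}, μ ≤ ν → up ν ≤ up μ := by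
    intro μ ν h
    exact (key μ (up ν)).mpr (h.trans (le_cl ν))
  have dn_anti : ∀ {lam κ : Y → L₂}, lam ≤ κ → dn κ ≤ dn lam := by
    intro lam κ h
    exact (key (dn κ) lam).mp (h.trans (le_cl' κ))
  have closed : ∀ μ : X → L₁, dn (up (dn (up μ))) = dn (up μ) := fun μ =>
    le_antisymm (dn_anti (le_cl' (up μ))) (le_cl _)
  -- complete lattice structure on the concept lattice
  letI pM : PartialOrder (MAConceptLattice up dn) :=
    { le := (· ≤ ·)
      lt := fun p q => p ≤ q ∧ ¬ q ≤ p
      lt_iff_le_not_ge := fun _ _ => Iff.rfl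
      le_refl := fun p => le_refl p.1.1
      le_trans := fun p q r h h' => le_trans (α := X → L₁) h h'
      le_antisymm := fun p q h h' => by
        have h1 : p.1.1 = q.1.1 := le_antisymm (α := X → L₁) h h'
        have h2 : p.1.2 = q.1.2 := by rw [← p.2.1, ← q.2.1, h1]
        exact Subtype.ext (Prod.ext h1 h2) }
  have gc2 : @GaloisConnection (X → L₁) (MAConceptLattice up dn) _ pM.toPreorder
      (fun μ : X → L₁ => (⟨(dn (up μ), up (dn (up μ))), rfl, closed μ⟩ :
        MAConceptLattice up dn))
      (fun p : MAConceptLattice up dn => p.1.1) := by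
    intro μ p
    constructor
    · intro h
      exact (le_cl μ).trans h
    · intro h
      show dn (up μ) ≤ p.1.1
      have : dn (up μ) ≤ dn (up p.1.1) := dn_anti (up_anti h)
      rwa [p.2.1, p.2.2] at this
  letI gi2 : @GaloisInsertion (X → L₁) (MAConceptLattice up dn) _ pM.toPreorder
      (fun μ : X → L₁ => (⟨(dn (up μ), up (dn (up μ))), rfl, closed μ⟩ :
        MAConceptLattice up dn))
      (fun p : MAConceptLattice up dn => p.1.1) :=
    @GaloisInsertion.mk (X → L₁) (MAConceptLattice up dn) _ pM.toPreorder
      (fun μ : X → L₁ => (⟨(dn (up μ), up (dn (up μ))), rfl, closed μ⟩ :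
        MAConceptLattice up dn))
      (fun p : MAConceptLattice up dn => p.1.1)
      (fun μ _ => ⟨(dn (up μ), up (dn (up μ))), rfl, closed μ⟩) gc2
      (fun p => le_of_eq (((congrArg dn p.2.1).trans p.2.2).symm))
      (fun _ _ => rfl)
  letI instM : CompleteLattice (MAConceptLattice up dn) := gi2.liftCompleteLattice
  refine ⟨⟨instM, fun p q => Iff.rfl⟩, ?_⟩
  refine ⟨⟨⟨fun p => ⟨p.1.1, by rw [p.2.1, p.2.2]⟩,
      fun ν => ⟨(ν.1, up ν.1), rfl, ν.2⟩, ?_, ?_⟩, ?_⟩, fun p => rfl⟩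
  · intro p
    exact Subtype.ext (Prod.ext rfl p.2.1)
  · intro ν
    rfl
  · intro p q
    exact Iff.rfl
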